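/- Let $n \geq 1$ be an integer and let $m = 2^{2n+1} + \varepsilon \cdot 2^{n+1} + 1$ where $\varepsilon \in \{1, -1\}$. Then $m$ is coprime to $6$, and there exists a prime $r$ with $r \neq 2$, $r \neq 3$, and $v_r(m) > v_r(2n+1)$, where $v_r$ denotes the $r$-adic valuation. -/

import Mathlib

/-- For `m = 2^(2n+1) ± 2^(n+1) + 1` (with `n ≥ 1`), `m` is coprime to `6` and there
is a prime `r ∉ {2,3}` with `v_r(m) > v_r(2n+1)`. -/
theorem suzuki_torus_order_arith (n : ℕ) (hn : 1 ≤ n) (ε : ℤ)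
    (hε : ε = 1 ∨ ε = -1) (m : ℕ)
    (hm : (m : ℤ) = 2 ^ (2 * n + 1) + ε * 2 ^ (n + 1) + 1) :
    Nat.Coprime m 6 ∧
      ∃ r : ℕ, r.Prime ∧ r ≠ 2 ∧ r ≠ 3 ∧
        (2 * n + 1).factorization r < m.factorization r := by
  -- m is odd
  have h2 : ¬ (2 ∣ m) := by
    intro h
    have h' : (2:ℤ) ∣ (m:ℤ) := by exact_mod_cast h
    rw [hm] at h'
    have e1 : (2:ℤ) ^ (2*n+1) = 2 * 2 ^ (2*n) := by ring
    have e2 : (2:ℤ) ^ (n+1) = 2 * 2 ^ n := by ring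
    rw [e1, e2] at h'
    have : (2:ℤ) ∣ 1 := (dvd_add_right ⟨2^(2*n) + ε * 2^n, by ring⟩).mp h'
    norm_num at this
  -- m is not divisible by 3
  have h3 : ¬ (3 ∣ m) := by
    intro h
    have h' : ((m:ℤ) : ZMod 3) = 0 := by
      have : (3:ℤ) ∣ (m:ℤ) := by exact_mod_cast h
      exact_mod_cast (ZMod.intCast_zmod_eq_zero_iff_dvd _ 3).2 this
    rw [hm] at h'
    push_cast at h'
    have e1 : (2:ZMod 3) ^ (2 * n + 1) = 2 := by
      rw [pow_succ, pow_mul, show ((2:ZMod 3))^2 = 1 from by decide, one_pow, one_mul]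
    rw [e1] at h'
    have h'' : (ε : ZMod 3) * 2 ^ (n + 1) = 0 := by
      have : (2:ZMod 3) + 1 = 0 := by decide
      linear_combination h' - this
    have hε0 : (ε : ZMod 3) ≠ 0 := by
      rcases hε with rfl | rfl <;> push_cast <;> decide
    have h20 : (2:ZMod 3) ^ (n+1) ≠ 0 := pow_ne_zero _ (by decide)
    exact (mul_ne_zero hε0 h20) h''
  -- coprime to 6
  have c2 : Nat.Coprime m 2 := ((Nat.Prime.coprime_iff_not_dvd Nat.prime_two).2 h2).symm
  have c3 : Nat.Coprime m 3 := ((Nat.Prime.coprime_iff_not_dvd Nat.prime_three).2 h3).symm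
  have hcop : Nat.Coprime m 6 := by
    have : (6:ℕ) = 2 * 3 := by norm_num
    rw [this]
    exact Nat.Coprime.mul_right c2 c3
  refine ⟨hcop, ?_⟩
  -- size bound : 2n+1 < m
  have hpow : (2 * n + 2 : ℤ) ≤ 2 ^ (n + 1) := by
    have := @Nat.lt_two_pow_self n
    have : (n : ℤ) < 2 ^ n := by exact_mod_cast this
    have h2n : (2:ℤ)^(n+1) = 2 * 2^n := by ring
    omega
  have hpow2 : (2:ℤ) * 2 ^ (n + 1) ≤ 2 ^ (2 * n + 1) := by
    have : (2:ℤ) * 2 ^ (n+1) = 2 ^ (n + 2) := by ring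
    rw [this]
    exact pow_le_pow_right₀ (by norm_num) (by omega)
  have hlt : 2 * n + 1 < m := by
    have : (2 * n + 1 : ℤ) < (m : ℤ) := by
      rcases hε with rfl | rfl <;> rw [hm] <;> nlinarith [pow_pos (by norm_num : (0:ℤ) < 2) (n+1)]
    exact_mod_cast this
  have hm0 : m ≠ 0 := by omega
  by_contra hcon
  push_neg at hcon
  have hdvd : m ∣ 2 * n + 1 := by
    rw [← Nat.factorization_le_iff_dvd hm0 (by omega)]
    intro r
    by_cases hr : r.Prime
    · by_cases hr2 : r = 2
      · subst hr2
        simp [Nat.factorization_eq_zero_of_not_dvd h2]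
      · by_cases hr3 : r = 3
        · subst hr3
          simp [Nat.factorization_eq_zero_of_not_dvd h3]
        · exact hcon r hr hr2 hr3
    · simp [Nat.factorization_eq_zero_of_not_prime _ hr]
  have := Nat.le_of_dvd (by omega) hdvd
  omega
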